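/- Let G ∈ 𝒢_n^m, let 0 ≤ α < 1, and let v₁ ∈ S attain the maximum within-S outdegree (d*(v₁) ≥ d*(s) for all s ∈ S). Then α²·Σ_{s∈S}(d*(s))² + α²(n−m) + (1−α)²·c₂(G*) ≤ E_α(G) ≤ α²·(d*(v₁)+n−m)² + α²·Σ_{s∈S, s≠v₁}(d*(s))² + (1−α)²·c₂(G*). Moreover, for 0 < α < 1: the lower bound is attained if and only if every hung tree is an in-tree with root at its vertex of S (inside each fiber the root has outdegree 0 and every other vertex has outdegree 1); the upper bound is attained if and only if there is a vertex v of maximal within-S outdegree such that n_s = 1 for every s ∈ S with s ≠ v and the fiber at v induces an out-star with centre v. -/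

import Mathlib

open Polynomial Matrix Finset

/-- The outdegree of a vertex `v` of the digraph with adjacency matrix `A`. -/
noncomputable def outdeg {V : Type*} [Fintype V] (A : Matrix V V ℝ) (v : V) : ℝ := ∑ w, A v w

/-- The `A_α`-matrix `α·D⁺ + (1-α)·A` of a digraph with adjacency matrix `A`. -/
noncomputable def Aalpha {V : Type*} [Fintype V] [DecidableEq V] (α : ℝ) (A : Matrix V V ℝ) :
    Matrix V V ℝ :=
  α • Matrix.diagonal (outdeg A) + (1 - α) • A

/-- The spectral radius of a real square matrix: the maximum modulus of its complex
eigenvalues (roots of the characteristic polynomial over `ℂ`). -/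
noncomputable def specRad {V : Type*} [Fintype V] [DecidableEq V] (M : Matrix V V ℝ) : ℝ :=
  sSup {x : ℝ | ∃ z : ℂ, (M.map ((↑) : ℝ → ℂ)).charpoly.IsRoot z ∧ ‖z‖ = x}

/-- The `A_α` energy of a digraph: the sum of the squares of the eigenvalues of its
`A_α`-matrix, equivalently `trace (A_α(G)²)`. -/
noncomputable def Ealpha {V : Type*} [Fintype V] [DecidableEq V] (α : ℝ) (A : Matrix V V ℝ) : ℝ :=
  Matrix.trace (Aalpha α A * Aalpha α A)

/-- The outdegree of `s` within the vertex set `S` (the within-`S` outdegree `d*(s)`). -/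
noncomputable def dStar {V : Type*} [Fintype V] (A : Matrix V V ℝ) (S : Finset V) (s : V) : ℝ :=
  ∑ v ∈ S, A s v

/-- The size `n_s` of the fiber `r⁻¹(s)`. -/
def fibCard {V : Type*} [Fintype V] [DecidableEq V] (r : V → V) (s : V) : ℕ :=
  (Finset.univ.filter (fun v => r v = s)).card

/-- The underlying undirected graph of the induced subdigraph on the fiber `r⁻¹(s)`. -/
def fiberGraph {V : Type*} (A : Matrix V V ℝ) (r : V → V) (s : V) :
    SimpleGraph {v : V // r v = s} where
  Adj u w := u ≠ w ∧ (A u.1 w.1 = 1 ∨ A w.1 u.1 = 1)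
  symm := ⟨fun _ _ h => ⟨h.1.symm, h.2.symm⟩⟩
  loopless := ⟨fun _ h => h.1 rfl⟩

/-- The principal submatrix of `A` with rows and columns indexed by `S`. -/
def subm {V : Type*} (A : Matrix V V ℝ) (S : Finset V) :
    Matrix {v : V // v ∈ S} {v : V // v ∈ S} ℝ :=
  A.submatrix (fun x => x.1) (fun x => x.1)

/-- `c₂(G*) = trace(A*²)`, the number of closed walks of length 2 in the strong component. -/
noncomputable def c2star {V : Type*} [Fintype V] [DecidableEq V] (A : Matrix V V ℝ)
    (S : Finset V) : ℝ :=
  Matrix.trace (subm A S * subm A S)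

/-- Membership in the class `𝒢_n^m`: `A` is the adjacency matrix of a digraph of order `n`
with a unique strong component on the vertex set `S` of order `m`, with a directed tree
(the fiber `r⁻¹(s)`) hung on each vertex `s ∈ S`. -/
structure IsGnm {V : Type*} [Fintype V] [DecidableEq V] (A : Matrix V V ℝ) (S : Finset V)
    (r : V → V) (n m : ℕ) : Prop where
  zero_one : ∀ u v, A u v = 0 ∨ A u v = 1
  loopless : ∀ v, A v v = 0
  card_V : Fintype.card V = n
  card_S : S.card = m
  two_le_m : 2 ≤ m
  m_lt_n : m < n
  strong : ∀ u ∈ S, ∀ v ∈ S, Relation.ReflTransGen (fun a b => a ∈ S ∧ b ∈ S ∧ A a b = 1) u v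
  r_mem : ∀ v, r v ∈ S
  r_fix : ∀ s ∈ S, r s = s
  arc_cases : ∀ u v, A u v = 1 → (u ∈ S ∧ v ∈ S) ∨ r u = r v
  fiber_no_symm : ∀ u v, r u = r v → A u v = 1 → A v u = 0
  fiber_tree : ∀ s ∈ S, (fiberGraph A r s).IsTree

/-- Every hung tree is an in-tree with root at its vertex of `S`: inside each fiber the
root has outdegree `0` and every other vertex has outdegree `1`. -/
def InTrees {V : Type*} [Fintype V] [DecidableEq V] (A : Matrix V V ℝ) (S : Finset V)
    (r : V → V) : Prop :=
  (∀ v, v ∉ S → (∑ w ∈ Finset.univ.filter (fun w => r w = r v), A v w) = 1) ∧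
  (∀ s ∈ S, (∑ w ∈ Finset.univ.filter (fun w => r w = s), A s w) = 0)

/-- All hung trees are trivial except the one at `v`, which is an out-star with centre `v`. -/
def OutStarAt {V : Type*} [Fintype V] [DecidableEq V] (A : Matrix V V ℝ) (S : Finset V)
    (r : V → V) (v : V) : Prop :=
  (∀ s ∈ S, s ≠ v → fibCard r s = 1) ∧ (∀ u w, r u = v → A u w = 1 → u = v)

lemma fiber_arc_count {V : Type*} [Fintype V] [DecidableEq V] (A : Matrix V V ℝ) (r : V → V)
    (s : V) (h01 : ∀ u v, A u v = 0 ∨ A u v = 1) (hloop : ∀ v, A v v = 0)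
    (hns : ∀ u v, r u = r v → A u v = 1 → A v u = 0)
    (htree : (fiberGraph A r s).IsTree) :
    ∑ v ∈ univ.filter (fun v => r v = s), ∑ w ∈ univ.filter (fun w => r w = s), A v w
      = (fibCard r s : ℝ) - 1 := by
  classical
  set G := fiberGraph A r s with hG
  haveI : DecidableRel G.Adj := fun a b => Classical.dec _
  have hsub : ∀ f : V → ℝ, ∑ v ∈ univ.filter (fun v => r v = s), f v
      = ∑ v : {v // r v = s}, f v.1 := fun f => Finset.sum_subtype _ (by simp) f
  have hLHS : ∑ v ∈ univ.filter (fun v => r v = s), ∑ w ∈ univ.filter (fun w => r w = s), A v w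
      = ∑ v : {v // r v = s}, ∑ w : {v // r v = s}, A v.1 w.1 := by
    rw [hsub]
    exact Finset.sum_congr rfl fun v _ => hsub _
  have hpt : ∀ v w : {v // r v = s},
      A v.1 w.1 + A w.1 v.1 = (if G.Adj v w then (1:ℝ) else 0) := by
    intro v w
    by_cases hvw : v = w
    · subst hvw
      rw [if_neg (G.loopless.irrefl v)]
      simp [hloop]
    · have hr : r v.1 = r w.1 := by rw [v.2, w.2]
      by_cases hadj : G.Adj v w
      · rw [if_pos hadj]
        have hc : A v.1 w.1 = 1 ∨ A w.1 v.1 = 1 := (show (fiberGraph A r s).Adj v w from hadj).2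
        rcases hc with h1 | h1
        · rw [h1, hns _ _ hr h1]; ring
        · rw [h1, hns _ _ hr.symm h1]; ring
      · rw [if_neg hadj]
        have hc : ¬(A v.1 w.1 = 1 ∨ A w.1 v.1 = 1) := fun hc => hadj (show (fiberGraph A r s).Adj v w from ⟨hvw, hc⟩)
        push_neg at hc
        have h1 : A v.1 w.1 = 0 := (h01 v.1 w.1).resolve_right hc.1
        have h2 : A w.1 v.1 = 0 := (h01 w.1 v.1).resolve_right hc.2
        rw [h1, h2]; ring
  have hdeg : ∀ v : {v // r v = s},
      ∑ w : {v // r v = s}, (if G.Adj v w then (1:ℝ) else 0) = (G.degree v : ℝ) := by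
    intro v
    rw [Finset.sum_boole]
    norm_cast
    simp [SimpleGraph.degree, SimpleGraph.neighborFinset_eq_filter]
  have e1 : ∑ v : {v // r v = s}, ∑ w : {v // r v = s}, (A v.1 w.1 + A w.1 v.1)
      = ∑ v, (G.degree v : ℝ) := by
    refine Finset.sum_congr rfl fun v _ => ?_
    rw [← hdeg v]
    exact Finset.sum_congr rfl fun w _ => hpt v w
  have e2 : ∑ v : {v // r v = s}, ∑ w : {v // r v = s}, (A v.1 w.1 + A w.1 v.1)
      = 2 * ∑ v : {v // r v = s}, ∑ w : {v // r v = s}, A v.1 w.1 := by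
    simp only [Finset.sum_add_distrib]
    rw [Finset.sum_comm (f := fun (v w : {v // r v = s}) => A w.1 v.1)]
    ring
  have hE : (G.edgeFinset.card : ℝ) = (fibCard r s : ℝ) - 1 := by
    have := htree.card_edgeFinset
    have hcs : Fintype.card {v : V // r v = s} = fibCard r s := Fintype.card_subtype _
    rw [hcs] at this
    have h2 : (G.edgeFinset.card : ℝ) + 1 = (fibCard r s : ℝ) := by exact_mod_cast this
    linarith
  have hsumdeg : ∑ v, (G.degree v : ℝ) = 2 * (fibCard r s : ℝ) - 2 := by
    have := G.sum_degrees_eq_twice_card_edges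
    have h2 : (∑ v, (G.degree v : ℝ)) = 2 * (G.edgeFinset.card : ℝ) := by exact_mod_cast this
    rw [h2, hE]; ring
  rw [hLHS]
  rw [← e1, e2] at hsumdeg
  linarith

lemma exists_support_singleton {V : Type*} [Fintype V] (f : V → ℝ) (hf : ∀ v, 0 ≤ f v)
    (h : (∑ v, f v)^2 = ∑ v, f v^2) (hpos : 0 < ∑ v, f v) :
    ∃ v₀, f v₀ = ∑ v, f v ∧ ∀ w, w ≠ v₀ → f w = 0 := by
  classical
  have hid : ∑ v, f v * ((∑ v, f v) - f v) = 0 := by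
    have h1 : (∑ v, f v) * (∑ v, f v) = ∑ v, f v * (∑ v, f v) := by rw [← Finset.sum_mul]
    have h2 : ∑ v, f v * (∑ v, f v) = ∑ v, (f v^2 + f v * ((∑ v, f v) - f v)) :=
      Finset.sum_congr rfl fun v _ => by ring
    rw [Finset.sum_add_distrib] at h2
    nlinarith [h]
  have hterm : ∀ v, f v * ((∑ v, f v) - f v) = 0 := by
    have hle : ∀ v, f v ≤ ∑ v, f v := fun v =>
      Finset.single_le_sum (fun i _ => hf i) (Finset.mem_univ v)
    have := (Finset.sum_eq_zero_iff_of_nonneg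
      (fun v _ => mul_nonneg (hf v) (by linarith [hle v]))).1 hid
    exact fun v => this v (Finset.mem_univ v)
  obtain ⟨v₀, hv₀⟩ : ∃ v, f v ≠ 0 := by
    by_contra hc; push_neg at hc
    have : (∑ v, f v) = 0 := Finset.sum_eq_zero (fun v _ => hc v)
    linarith
  have hfv₀ : f v₀ = ∑ v, f v := by
    rcases mul_eq_zero.1 (hterm v₀) with h'|h'
    · exact absurd h' hv₀
    · linarith
  refine ⟨v₀, hfv₀, fun w hw => ?_⟩
  have hsub : f v₀ + f w ≤ ∑ v, f v := by
    have h1 : ∑ v ∈ ({v₀, w} : Finset V), f v ≤ ∑ v, f v :=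
      Finset.sum_le_sum_of_subset_of_nonneg (Finset.subset_univ _) (fun i _ _ => hf i)
    rwa [Finset.sum_pair (Ne.symm hw)] at h1
  have := hf w
  linarith

set_option maxHeartbeats 1000000 in
/-- For `G ∈ 𝒢_n^m` with `v₁ ∈ S` of maximal within-`S` outdegree,
`α²Σ_{s∈S}(d*(s))² + α²(n-m) + (1-α)²c₂(G*) ≤ E_α(G) ≤
 α²(d*(v₁)+n-m)² + α²Σ_{s≠v₁}(d*(s))² + (1-α)²c₂(G*)`; for `0 < α < 1`, the lower bound is
attained iff all hung trees are in-trees, and the upper bound iff there is a vertex of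
maximal within-`S` outdegree whose fiber is an out-star while all other fibers are trivial. -/
theorem stmt12 {V : Type*} [Fintype V] [DecidableEq V] (A : Matrix V V ℝ) (S : Finset V)
    (r : V → V) (n m : ℕ) (hG : IsGnm A S r n m) (v₁ : V) (hv₁ : v₁ ∈ S)
    (hmax : ∀ s ∈ S, dStar A S s ≤ dStar A S v₁)
    (α : ℝ) (hα0 : 0 ≤ α) (hα1 : α < 1) :
    (α ^ 2 * ∑ s ∈ S, (dStar A S s) ^ 2 + α ^ 2 * ((n : ℝ) - m)
        + (1 - α) ^ 2 * c2star A S ≤ Ealpha α A ∧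
      Ealpha α A ≤ α ^ 2 * (dStar A S v₁ + (n : ℝ) - m) ^ 2
        + α ^ 2 * ∑ s ∈ S.erase v₁, (dStar A S s) ^ 2 + (1 - α) ^ 2 * c2star A S) ∧
    (0 < α →
      ((Ealpha α A =
          α ^ 2 * ∑ s ∈ S, (dStar A S s) ^ 2 + α ^ 2 * ((n : ℝ) - m)
            + (1 - α) ^ 2 * c2star A S ↔ InTrees A S r) ∧
       (Ealpha α A =
          α ^ 2 * (dStar A S v₁ + (n : ℝ) - m) ^ 2
            + α ^ 2 * ∑ s ∈ S.erase v₁, (dStar A S s) ^ 2 + (1 - α) ^ 2 * c2star A S ↔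
          ∃ v ∈ S, (∀ s ∈ S, dStar A S s ≤ dStar A S v) ∧ OutStarAt A S r v))) := by
  classical
  obtain ⟨h01, hloop, hcard, hcardS, hm2, hmn, hstrong, hrmem, hrfix, harc, hnosym, htree⟩ := hG
  set t : V → ℝ := fun v => ∑ w ∈ univ.filter (fun w => r w = r v), A v w with ht
  set CS : Finset V := univ.filter (fun v => ¬ v ∈ S) with hCSdef
  have hA0 : ∀ u v, 0 ≤ A u v := fun u v => by rcases h01 u v with h|h <;> rw [h] <;> norm_num
  -- sums of entries are naturals
  have hnatsum : ∀ (v : V) (F : Finset V), ∃ k : ℕ, ∑ w ∈ F, A v w = (k : ℝ) := by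
    intro v F
    refine ⟨(F.filter (fun w => A v w = 1)).card, ?_⟩
    rw [← Finset.sum_boole]
    refine Finset.sum_congr rfl fun w _ => ?_
    rcases h01 v w with h|h
    · rw [if_neg (by rw [h]; norm_num), h]
    · rw [if_pos h, h]
  have ht0 : ∀ v, 0 ≤ t v := fun v => Finset.sum_nonneg fun w _ => hA0 v w
  have htsq : ∀ v, t v ≤ t v ^ 2 := by
    intro v
    obtain ⟨k, hk⟩ := hnatsum v (univ.filter (fun w => r w = r v))
    have hk' : t v = (k : ℝ) := hk
    rw [hk']
    exact_mod_cast Nat.le_self_pow two_ne_zero k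
  have ht01 : ∀ v, t v ^ 2 = t v → t v = 0 ∨ t v = 1 := by
    intro v h
    have h2 : t v * (t v - 1) = 0 := by
      rw [mul_sub, mul_one, ← sq]
      linarith
    rcases mul_eq_zero.1 h2 with h'|h'
    · exact Or.inl h'
    · exact Or.inr (by linarith)
  -- every vertex of S has within-S outdegree at least 1
  have hd1 : ∀ s ∈ S, 1 ≤ dStar A S s := by
    intro s hs
    obtain ⟨u, hu, hus⟩ := Finset.exists_mem_ne (by omega : 1 < S.card) s
    rcases (hstrong s hs u hu).cases_head with heq | ⟨c, ⟨_, hcS, hAc⟩, _⟩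
    · exact absurd heq.symm hus
    · have hle : A s c ≤ dStar A S s := by
        rw [dStar]; exact Finset.single_le_sum (fun i _ => hA0 s i) hcS
      linarith
  have hSfilter : univ.filter (fun v => v ∈ S) = S := by ext x; simp
  have hsplit : ∀ f : V → ℝ, ∑ v, f v = ∑ v ∈ S, f v + ∑ v ∈ CS, f v := by
    intro f
    rw [← Finset.sum_filter_add_sum_filter_not univ (fun v => v ∈ S) f, hSfilter, hCSdef]
  -- outdegree decompositions
  have houtS : ∀ v ∈ S, outdeg A v = dStar A S v + t v := by
    intro v hv
    have hrv : r v = v := hrfix v hv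
    have hsupp : ∀ w, w ∉ S → r w ≠ v → A v w = 0 := by
      intro w hw hrw
      rcases h01 v w with h|h
      · exact h
      rcases harc v w h with ⟨_, hwS⟩ | hr
      · exact absurd hwS hw
      · exact absurd (by rw [← hr, hrv]) hrw
    rw [outdeg, ← Finset.sum_filter_add_sum_filter_not univ (fun v => v ∈ S) (A v), hSfilter]
    congr 1
    have h1 : ∑ w ∈ univ.filter (fun w => ¬ w ∈ S), A v w
        = ∑ w ∈ univ.filter (fun w => ¬ w ∈ S ∧ r w = v), A v w := by
      refine (Finset.sum_subset ?_ ?_).symm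
      · intro x hx; simp only [Finset.mem_filter, Finset.mem_univ, true_and] at hx ⊢
        exact hx.1
      · intro x hx hx'
        simp only [Finset.mem_filter, Finset.mem_univ, true_and, not_and] at hx hx'
        exact hsupp x hx (hx' hx)
    have h2 : t v = ∑ w ∈ univ.filter (fun w => ¬ w ∈ S ∧ r w = v), A v w := by
      have hteq : t v = ∑ w ∈ univ.filter (fun w => r w = v), A v w := by
        simp only [ht, hrv]
      rw [hteq]
      refine (Finset.sum_subset ?_ ?_).symm
      · intro x hx; simp only [Finset.mem_filter, Finset.mem_univ, true_and] at hx ⊢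
        exact hx.2
      · intro x hx hx'
        simp only [Finset.mem_filter, Finset.mem_univ, true_and, not_and] at hx hx'
        have hxS : x ∈ S := by by_contra hc; exact hx' hc hx
        have hxv : x = v := by rw [← hrfix x hxS, hx]
        rw [hxv, hloop]
    rw [h1, h2]
  have houtC : ∀ v, v ∉ S → outdeg A v = t v := by
    intro v hv
    have h1 : ∑ w, A v w = ∑ w ∈ univ.filter (fun w => r w = r v), A v w := by
      refine (Finset.sum_subset (Finset.filter_subset _ _) ?_).symm
      intro x _ hx
      simp only [Finset.mem_filter, Finset.mem_univ, true_and] at hx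
      rcases h01 v x with h|h
      · exact h
      · rcases harc v x h with ⟨hvS, _⟩ | hr
        · exact absurd hvS hv
        · exact absurd hr.symm hx
    rw [outdeg, h1]
  -- fiber sums
  have hfib : ∀ s ∈ S, ∑ v ∈ univ.filter (fun v => r v = s), t v = (fibCard r s : ℝ) - 1 := by
    intro s hs
    rw [← fiber_arc_count A r s h01 hloop hnosym (htree s hs)]
    refine Finset.sum_congr rfl fun v hv => ?_
    simp only [Finset.mem_filter, Finset.mem_univ, true_and] at hv
    simp only [ht, hv]
  have hnsum : ∑ s ∈ S, (fibCard r s : ℝ) = (n : ℝ) := by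
    have h1 := Finset.card_eq_sum_card_fiberwise (fun v (_ : v ∈ univ) => hrmem v) (t := S)
    have h2 : ((univ : Finset V).card : ℝ) = ∑ s ∈ S, (fibCard r s : ℝ) := by
      exact_mod_cast h1
    rw [← h2, Finset.card_univ, hcard]
  have hTtotal : ∑ v, t v = (n : ℝ) - m := by
    rw [← Finset.sum_fiberwise_of_maps_to (fun v _ => hrmem v) t,
      Finset.sum_congr rfl (fun s hs => hfib s hs), Finset.sum_sub_distrib, hnsum]
    simp [hcardS]
  have hCScard : (CS.card : ℝ) = (n : ℝ) - m := by
    have h2 : CS = univ \ S := by ext x; simp [hCSdef]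
    rw [h2, Finset.card_sdiff_of_subset (Finset.subset_univ S), Finset.card_univ, hcard, hcardS,
      Nat.cast_sub (le_of_lt hmn)]
  -- Q : sum of squared outdegrees
  have hQ : ∑ v, outdeg A v ^ 2
      = ∑ s ∈ S, (dStar A S s + t s) ^ 2 + ∑ v ∈ CS, t v ^ 2 := by
    rw [hsplit (fun v => outdeg A v ^ 2)]
    congr 1
    · exact Finset.sum_congr rfl fun s hs => by rw [houtS s hs]
    · refine Finset.sum_congr rfl fun v hv => ?_
      have : v ∉ S := by simp only [hCSdef, Finset.mem_filter] at hv; exact hv.2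
      rw [houtC v this]
  -- trace decomposition of the energy
  have htrDA : Matrix.trace (Matrix.diagonal (outdeg A) * A) = 0 := by
    simp [Matrix.trace, Matrix.diag, Matrix.diagonal_mul, hloop]
  have htrAD : Matrix.trace (A * Matrix.diagonal (outdeg A)) = 0 := by
    simp [Matrix.trace, Matrix.diag, Matrix.mul_diagonal, hloop]
  have htrDD : Matrix.trace (Matrix.diagonal (outdeg A) * Matrix.diagonal (outdeg A))
      = ∑ v, outdeg A v ^ 2 := by
    rw [Matrix.diagonal_mul_diagonal, Matrix.trace_diagonal]
    exact Finset.sum_congr rfl fun v _ => (sq (outdeg A v)).symm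
  have htrAA : Matrix.trace (A * A) = c2star A S := by
    have hAA : Matrix.trace (A * A) = ∑ v, ∑ w, A v w * A w v := by
      simp [Matrix.trace, Matrix.diag, Matrix.mul_apply]
    have hzero : ∀ v w, (v ∈ S ∧ w ∈ S) ∨ A v w * A w v = 0 := by
      intro v w
      rcases h01 v w with h|h
      · right; rw [h]; ring
      rcases h01 w v with h'|h'
      · right; rw [h']; ring
      rcases harc v w h with hS | hr
      · left; exact hS
      · right; rw [hnosym v w hr h] at h'; norm_num at h'
    have hred : ∑ v, ∑ w, A v w * A w v = ∑ v ∈ S, ∑ w ∈ S, A v w * A w v := by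
      rw [← Finset.sum_subset (Finset.subset_univ S) (fun v _ hv =>
        Finset.sum_eq_zero fun w _ => by
          rcases hzero v w with ⟨hvS, _⟩|h
          · exact absurd hvS hv
          · exact h)]
      refine Finset.sum_congr rfl fun v _ => ?_
      rw [← Finset.sum_subset (Finset.subset_univ S) (fun w _ hw => by
        rcases hzero v w with ⟨_, hwS⟩|h
        · exact absurd hwS hw
        · exact h)]
    have hc2 : c2star A S = ∑ v ∈ S, ∑ w ∈ S, A v w * A w v := by
      rw [c2star]
      have h1 : Matrix.trace (subm A S * subm A S)
          = ∑ v : {x // x ∈ S}, ∑ w : {x // x ∈ S}, A v.1 w.1 * A w.1 v.1 := by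
        simp [Matrix.trace, Matrix.diag, Matrix.mul_apply, subm]
      rw [h1, Finset.sum_subtype S (fun x => Iff.rfl) (fun v => ∑ w ∈ S, A v w * A w v)]
      refine Finset.sum_congr rfl fun v _ => ?_
      rw [Finset.sum_subtype S (fun x => Iff.rfl) (fun w => A v.1 w * A w v.1)]
    rw [hAA, hred, hc2]
  have hE : Ealpha α A = α^2 * (∑ v, outdeg A v ^ 2) + (1-α)^2 * c2star A S := by
    rw [Ealpha, Aalpha]
    simp only [add_mul, mul_add, Matrix.trace_add, Matrix.smul_mul, Matrix.mul_smul,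
      Matrix.trace_smul, smul_eq_mul, htrDA, htrAD, htrDD, htrAA, mul_zero, add_zero,
      zero_add, smul_smul]
    ring
  -- abbreviations for slack terms
  set a : ℝ := ∑ s ∈ S, (2 * dStar A S s * t s + (t s ^ 2 - t s)) with ha
  set b : ℝ := ∑ v ∈ CS, (t v ^ 2 - t v) with hb
  have hCSmem : ∀ v ∈ CS, v ∉ S := fun v hv => by
    simp only [hCSdef, Finset.mem_filter] at hv; exact hv.2
  have ha0 : 0 ≤ a := Finset.sum_nonneg fun s hs => by
    have h1 := ht0 s; have h2 := htsq s; have h3 := hd1 s hs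
    have h4 : 1 * t s ≤ dStar A S s * t s := mul_le_mul_of_nonneg_right h3 h1
    rw [one_mul] at h4
    linarith
  have hb0 : 0 ≤ b := Finset.sum_nonneg fun v _ => by linarith [htsq v]
  have hTsplit : (n : ℝ) - m = ∑ s ∈ S, t s + ∑ v ∈ CS, t v := by
    rw [← hTtotal, hsplit t]
  have hS1 : ∑ s ∈ S, (dStar A S s + t s) ^ 2
      = (∑ s ∈ S, dStar A S s ^ 2) + (∑ s ∈ S, t s) + a := by
    rw [ha, ← Finset.sum_add_distrib, ← Finset.sum_add_distrib]
    exact Finset.sum_congr rfl fun s _ => by ring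
  have hC1 : ∑ v ∈ CS, t v ^ 2 = (∑ v ∈ CS, t v) + b := by
    rw [hb, ← Finset.sum_add_distrib]
    exact Finset.sum_congr rfl fun v _ => by ring
  have hQLB : ∑ v, outdeg A v ^ 2
      = (∑ s ∈ S, dStar A S s ^ 2) + ((n:ℝ) - m) + (a + b) := by
    rw [hQ, hS1, hC1, hTsplit]
    ring
  have hlbid : Ealpha α A - (α ^ 2 * ∑ s ∈ S, (dStar A S s) ^ 2 + α ^ 2 * ((n : ℝ) - m)
      + (1 - α) ^ 2 * c2star A S) = α ^ 2 * (a + b) := by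
    rw [hE, hQLB]; ring
  set u1 : ℝ := dStar A S v₁ * ((n:ℝ) - m) - ∑ s ∈ S, dStar A S s * t s with hu1
  set u2 : ℝ := ((n:ℝ) - m) ^ 2 - (∑ s ∈ S, t s ^ 2 + ∑ v ∈ CS, t v ^ 2) with hu2
  have hu1split : u1 = ∑ s ∈ S, (dStar A S v₁ - dStar A S s) * t s
      + dStar A S v₁ * ∑ v ∈ CS, t v := by
    have e : ∑ s ∈ S, (dStar A S v₁ - dStar A S s) * t s
        = dStar A S v₁ * ∑ s ∈ S, t s - ∑ s ∈ S, dStar A S s * t s := by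
      rw [Finset.mul_sum, ← Finset.sum_sub_distrib]
      exact Finset.sum_congr rfl fun s _ => by ring
    rw [hu1, hTsplit, e]
    ring
  have hu1nn : 0 ≤ u1 := by
    rw [hu1split]
    have h1 : 0 ≤ ∑ s ∈ S, (dStar A S v₁ - dStar A S s) * t s :=
      Finset.sum_nonneg fun s hs => mul_nonneg (by linarith [hmax s hs]) (ht0 s)
    have h2 : 0 ≤ ∑ v ∈ CS, t v := Finset.sum_nonneg fun v _ => ht0 v
    have h3 : 0 ≤ dStar A S v₁ := by linarith [hd1 v₁ hv₁]
    have h4 := mul_nonneg h3 h2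
    linarith
  have hsq : ∑ s ∈ S, t s ^ 2 + ∑ v ∈ CS, t v ^ 2 = ∑ v, t v ^ 2 :=
    (hsplit (fun v => t v ^ 2)).symm
  have hu2nn : 0 ≤ u2 := by
    rw [hu2, hsq, ← hTtotal]
    have := Finset.sum_sq_le_sq_sum_of_nonneg (s := univ) (f := t) (fun v _ => ht0 v)
    linarith
  have herase : ∑ s ∈ S.erase v₁, dStar A S s ^ 2
      = (∑ s ∈ S, dStar A S s ^ 2) - dStar A S v₁ ^ 2 := by
    have h := Finset.sum_erase_add S (fun s => dStar A S s ^ 2) hv₁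
    have h2 : ∑ x ∈ S.erase v₁, dStar A S x ^ 2 + dStar A S v₁ ^ 2
        = ∑ x ∈ S, dStar A S x ^ 2 := h
    linarith
  have hQUB : ∑ v, outdeg A v ^ 2 = (dStar A S v₁ + (n:ℝ) - m) ^ 2
      + ((∑ s ∈ S, dStar A S s ^ 2) - dStar A S v₁ ^ 2) - (2 * u1 + u2) := by
    have hS2 : ∑ s ∈ S, (dStar A S s + t s) ^ 2
        = (∑ s ∈ S, dStar A S s ^ 2) + 2 * (∑ s ∈ S, dStar A S s * t s)
          + (∑ s ∈ S, t s ^ 2) := by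
      rw [Finset.mul_sum, ← Finset.sum_add_distrib, ← Finset.sum_add_distrib]
      exact Finset.sum_congr rfl fun s _ => by ring
    rw [hQ, hS2, hu1, hu2]
    ring
  have hubid : α ^ 2 * (dStar A S v₁ + (n : ℝ) - m) ^ 2
      + α ^ 2 * ∑ s ∈ S.erase v₁, (dStar A S s) ^ 2 + (1 - α) ^ 2 * c2star A S
      - Ealpha α A = α ^ 2 * (2 * u1 + u2) := by
    rw [hE, hQUB, herase]; ring
  refine ⟨⟨?_, ?_⟩, ?_⟩
  · linarith [hlbid, mul_nonneg (sq_nonneg α) (add_nonneg ha0 hb0)]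
  · linarith [hubid, mul_nonneg (sq_nonneg α) (by linarith : (0:ℝ) ≤ 2 * u1 + u2)]
  intro hαpos
  have hα2 : (0:ℝ) < α ^ 2 := by positivity
  constructor
  · -- lower bound equality iff InTrees
    constructor
    · intro hEq
      have hab : a + b = 0 := by
        have h0 : α ^ 2 * (a + b) = 0 := by linarith [hlbid]
        rcases mul_eq_zero.1 h0 with h|h
        · exact absurd h (ne_of_gt hα2)
        · exact h
      have ha' : a = 0 := le_antisymm (by linarith) ha0
      have hb' : b = 0 := le_antisymm (by linarith) hb0
      have hsa : ∑ s ∈ S, (2 * dStar A S s * t s + (t s ^ 2 - t s)) = 0 := by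
        rw [← ha]; exact ha'
      have hsb : ∑ v ∈ CS, (t v ^ 2 - t v) = 0 := by rw [← hb]; exact hb'
      have hts0 : ∀ s ∈ S, t s = 0 := by
        intro s hs
        have h := (Finset.sum_eq_zero_iff_of_nonneg (fun s hs => by
          have h1 := ht0 s; have h2 := htsq s; have h3 := hd1 s hs
          have h4 : 1 * t s ≤ dStar A S s * t s := mul_le_mul_of_nonneg_right h3 h1
          rw [one_mul] at h4
          linarith)).1 hsa s hs
        have h1 := ht0 s; have h2 := htsq s; have h3 := hd1 s hs
        have h4 : 1 * t s ≤ dStar A S s * t s := mul_le_mul_of_nonneg_right h3 h1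
        rw [one_mul] at h4
        linarith
      have hbterm : ∀ v ∈ CS, t v ^ 2 - t v = 0 :=
        fun v hv => (Finset.sum_eq_zero_iff_of_nonneg (fun v _ => by linarith [htsq v])).1 hsb v hv
      have hsumCS : ∑ v ∈ CS, t v = (n:ℝ) - m := by
        have hz : ∑ s ∈ S, t s = 0 := Finset.sum_eq_zero hts0
        linarith [hTsplit]
      have hle1 : ∀ v ∈ CS, t v ≤ 1 := by
        intro v hv
        rcases ht01 v (by linarith [hbterm v hv]) with h|h <;> rw [h] <;> norm_num
      have hones : ∑ v ∈ CS, ((1:ℝ) - t v) = 0 := by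
        rw [Finset.sum_sub_distrib, Finset.sum_const, nsmul_eq_mul, hsumCS, mul_one, hCScard]
        ring
      have htCS1 : ∀ v ∈ CS, t v = 1 := by
        intro v hv
        have := (Finset.sum_eq_zero_iff_of_nonneg (fun v hv => by linarith [hle1 v hv])).1 hones v hv
        linarith
      refine ⟨fun v hv => ?_, fun s hs => ?_⟩
      · have hvCS : v ∈ CS := by simp [hCSdef, hv]
        exact htCS1 v hvCS
      · have h' := hts0 s hs
        simp only [ht, hrfix s hs] at h'
        exact h'
    · intro hIT
      obtain ⟨hIT1, hIT2⟩ := hIT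
      have hts0 : ∀ s ∈ S, t s = 0 := by
        intro s hs
        have h' := hIT2 s hs
        show t s = 0
        simp only [ht, hrfix s hs]
        exact h'
      have ht1 : ∀ v ∈ CS, t v = 1 := fun v hv => hIT1 v (hCSmem v hv)
      have ha' : a = 0 := by
        rw [ha]; exact Finset.sum_eq_zero fun s hs => by rw [hts0 s hs]; ring
      have hb' : b = 0 := by
        rw [hb]; exact Finset.sum_eq_zero fun v hv => by rw [ht1 v hv]; ring
      rw [ha', hb'] at hlbid
      norm_num at hlbid
      linarith
  · -- upper bound equality iff out-star
    constructor
    · intro hEq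
      have h12 : 2 * u1 + u2 = 0 := by
        have h0 : α ^ 2 * (2 * u1 + u2) = 0 := by linarith [hubid]
        rcases mul_eq_zero.1 h0 with h|h
        · exact absurd h (ne_of_gt hα2)
        · exact h
      have hu1z : u1 = 0 := le_antisymm (by linarith) hu1nn
      have hu2z : u2 = 0 := le_antisymm (by linarith) hu2nn
      have hTpos : (0:ℝ) < (n:ℝ) - m := by
        have : (m:ℝ) < n := by exact_mod_cast hmn
        linarith
      obtain ⟨v₀, hv₀T, hv₀z⟩ := exists_support_singleton t ht0
        (by rw [hTtotal, ← hsq]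
            rw [hu2] at hu2z
            linarith)
        (by rw [hTtotal]; exact hTpos)
      rw [hTtotal] at hv₀T
      have hu1sz := hu1z
      rw [hu1split] at hu1sz
      have hpart1 : 0 ≤ ∑ s ∈ S, (dStar A S v₁ - dStar A S s) * t s :=
        Finset.sum_nonneg fun s hs => mul_nonneg (by linarith [hmax s hs]) (ht0 s)
      have hpart2 : 0 ≤ ∑ v ∈ CS, t v := Finset.sum_nonneg fun v _ => ht0 v
      have hd1v₁ : 1 ≤ dStar A S v₁ := hd1 v₁ hv₁
      have hv₀S : v₀ ∈ S := by
        by_contra hc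
        have hvCS : v₀ ∈ CS := by simp [hCSdef, hc]
        have hle : (n:ℝ) - m ≤ ∑ v ∈ CS, t v := by
          rw [← hv₀T]; exact Finset.single_le_sum (fun v _ => ht0 v) hvCS
        have h5 : 1 * ∑ v ∈ CS, t v ≤ dStar A S v₁ * ∑ v ∈ CS, t v :=
          mul_le_mul_of_nonneg_right hd1v₁ hpart2
        rw [one_mul] at h5
        linarith
      have hdv₀ : dStar A S v₀ = dStar A S v₁ := by
        have hterm : (dStar A S v₁ - dStar A S v₀) * t v₀ = 0 := by
          have hz : ∑ s ∈ S, (dStar A S v₁ - dStar A S s) * t s = 0 := by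
            have h6 := mul_nonneg (by linarith : (0:ℝ) ≤ dStar A S v₁) hpart2
            linarith
          exact (Finset.sum_eq_zero_iff_of_nonneg (fun s hs =>
            mul_nonneg (by linarith [hmax s hs]) (ht0 s))).1 hz v₀ hv₀S
        rcases mul_eq_zero.1 hterm with h|h
        · linarith
        · rw [hv₀T] at h; linarith
      refine ⟨v₀, hv₀S, fun s hs => by rw [hdv₀]; exact hmax s hs, fun s hs hsv => ?_, ?_⟩
      · -- trivial fibers away from v₀
        have hall0 : ∑ v ∈ univ.filter (fun v => r v = s), t v = 0 := by
          refine Finset.sum_eq_zero fun v hv => ?_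
          simp only [Finset.mem_filter, Finset.mem_univ, true_and] at hv
          have hne : v ≠ v₀ := by
            intro hveq
            apply hsv
            rw [← hv, hveq, hrfix v₀ hv₀S]
          exact hv₀z v hne
        have hfx := hfib s hs
        rw [hall0] at hfx
        have : (fibCard r s : ℝ) = 1 := by linarith
        exact_mod_cast this
      · intro u w hru hAuw
        rcases harc u w hAuw with ⟨huS, _⟩ | hr
        · rw [← hrfix u huS]; exact hru
        · by_contra hne
          have htu : t u = 0 := hv₀z u hne
          have hwmem : w ∈ univ.filter (fun w' => r w' = r u) := by simp [hr.symm]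
          have hle : A u w ≤ t u := by
            show A u w ≤ ∑ w' ∈ univ.filter (fun w' => r w' = r u), A u w'
            exact Finset.single_le_sum (fun i _ => hA0 u i) hwmem
          rw [hAuw, htu] at hle
          linarith
    · rintro ⟨v, hvS, hvmax, hst1, hst2⟩
      have hdv : dStar A S v = dStar A S v₁ := le_antisymm (hmax v hvS) (hvmax v₁ hv₁)
      have hts : ∀ s ∈ S, s ≠ v → t s = 0 := by
        intro s hs hsv
        have hcard1 := hst1 s hs hsv
        unfold fibCard at hcard1
        have hfs : univ.filter (fun w => r w = s) = {s} := by
          obtain ⟨x, hx⟩ := Finset.card_eq_one.1 hcard1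
          have hsmem : s ∈ univ.filter (fun w => r w = s) := by simp [hrfix s hs]
          rw [hx] at hsmem ⊢
          simp only [Finset.mem_singleton] at hsmem
          rw [hsmem]
        show t s = 0
        simp only [ht, hrfix s hs]
        rw [hfs]
        simp [hloop]
      have htu : ∀ u, u ∉ S → t u = 0 := by
        intro u hu
        have hru : r u = v := by
          by_contra hc
          have h1 := hst1 (r u) (hrmem u) hc
          unfold fibCard at h1
          obtain ⟨x, hx⟩ := Finset.card_eq_one.1 h1
          have humem : u ∈ univ.filter (fun w => r w = r u) := by simp
          have hrumem : r u ∈ univ.filter (fun w => r w = r u) := by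
            simp [hrfix (r u) (hrmem u)]
          rw [hx] at humem hrumem
          simp only [Finset.mem_singleton] at humem hrumem
          rw [humem, ← hrumem] at hu
          exact hu (hrmem u)
        show t u = 0
        simp only [ht]
        refine Finset.sum_eq_zero fun w hw => ?_
        rcases h01 u w with h|h
        · exact h
        · exact absurd (hst2 u w hru h) (by rintro rfl; exact hu hvS)
      have htv : t v = (n:ℝ) - m := by
        have hfibv := hfib v hvS
        have hsum : ∑ x ∈ univ.filter (fun x => r x = v), t x = t v := by
          refine Finset.sum_eq_single_of_mem v (by simp [hrfix v hvS]) ?_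
          intro x hx hxv
          simp only [Finset.mem_filter, Finset.mem_univ, true_and] at hx
          refine htu x fun hxS => hxv ?_
          rw [← hrfix x hxS, hx]
        have hcv : (fibCard r v : ℝ) = (n:ℝ) - m + 1 := by
          have h1 : ∑ s ∈ S.erase v, (fibCard r s : ℝ) = ((S.erase v).card : ℝ) := by
            have e : ∀ s ∈ S.erase v, (fibCard r s : ℝ) = 1 := fun s hs => by
              simp [hst1 s (Finset.mem_of_mem_erase hs) (Finset.ne_of_mem_erase hs)]
            rw [Finset.sum_congr rfl e, Finset.sum_const, nsmul_eq_mul, mul_one]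
          have h2' := Finset.sum_erase_add S (fun s => (fibCard r s : ℝ)) hvS
          have h2 : ∑ x ∈ S.erase v, (fibCard r x : ℝ) + (fibCard r v : ℝ)
              = ∑ x ∈ S, (fibCard r x : ℝ) := h2'
          rw [h1, Finset.card_erase_of_mem hvS, hcardS] at h2
          have h3 : ((m - 1 : ℕ) : ℝ) = (m:ℝ) - 1 := by
            have h4 : 1 ≤ m := by omega
            push_cast [Nat.cast_sub h4]; ring
          rw [h3, hnsum] at h2
          linarith
        rw [hsum, hcv] at hfibv
        linarith
      have hsum_dt : ∑ s ∈ S, dStar A S s * t s = dStar A S v₁ * ((n:ℝ) - m) := by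
        rw [Finset.sum_eq_single_of_mem v hvS (fun s hs hsv => by rw [hts s hs hsv]; ring)]
        rw [htv, hdv]
      have hsum_t2S : ∑ s ∈ S, t s ^ 2 = ((n:ℝ) - m) ^ 2 := by
        rw [Finset.sum_eq_single_of_mem v hvS (fun s hs hsv => by rw [hts s hs hsv]; ring)]
        rw [htv]
      have hsum_t2C : ∑ w ∈ CS, t w ^ 2 = 0 :=
        Finset.sum_eq_zero fun w hw => by rw [htu w (hCSmem w hw)]; ring
      have hu1z : u1 = 0 := by rw [hu1, hsum_dt]; ring
      have hu2z : u2 = 0 := by rw [hu2, hsum_t2S, hsum_t2C]; ring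
      rw [hu1z, hu2z] at hubid
      norm_num at hubid
      linarith
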